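/- Let S be a semigroup, z₀ ∈ S, and f, g : S → ℂ satisfy g(xyz₀)=g(x)g(y)−f(x)f(y) for all x,y ∈ S, with f(z₀)=0 and g(z₀) ≠ 0 and g(z₀²)=0. Assume f and g are linearly independent. Then f(z₀²) ≠ 0, and setting γ := g(z₀)/f(z₀²), the pair (γf, γg) satisfies the cosine addition law: (γf)(xy) = (γf)(x)(γf)(y) − (γg)(x)(γg)(y) for all x,y ∈ S. -/

import Mathlib

theorem stmt_14 {S : Type*} [Semigroup S] (z₀ : S) (f g : S → ℂ)
    (h : ∀ x y : S, g (x * y * z₀) = g x * g y - f x * f y)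
    (hf : f z₀ = 0) (hg : g z₀ ≠ 0) (hg2 : g (z₀ * z₀) = 0)
    (hli : LinearIndependent ℂ ![f, g]) :
    f (z₀ * z₀) ≠ 0 ∧ ∀ x y : S,
      (g z₀ / f (z₀ * z₀)) * f (x * y) =
        ((g z₀ / f (z₀ * z₀)) * f x) * ((g z₀ / f (z₀ * z₀)) * f y) -
          ((g z₀ / f (z₀ * z₀)) * g x) * ((g z₀ / f (z₀ * z₀)) * g y) := by
  -- Key identity: g(x·z₀)·g(z₀) = −f(x)·f(z₀²)
  have key : ∀ x : S, g (x * z₀) * g z₀ = -(f x * f (z₀ * z₀)) := by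
    intro x
    have h1 := h (x * z₀) z₀
    have h2 := h x (z₀ * z₀)
    have hassoc : x * z₀ * z₀ * z₀ = x * (z₀ * z₀) * z₀ := by
      rw [mul_assoc x z₀ z₀]
    rw [hassoc, h2] at h1
    rw [hf, hg2] at h1
    linear_combination -h1
  have hgne : g ≠ 0 := by
    have := hli.ne_zero 1
    simpa using this
  have hF : f (z₀ * z₀) ≠ 0 := by
    intro hF0
    apply hgne
    funext x
    have k1 := key x
    rw [hF0, mul_zero, neg_zero] at k1
    have hx0 : g (x * z₀) = 0 := by
      rcases mul_eq_zero.mp k1 with h' | h'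
      · exact h'
      · exact absurd h' hg
    -- g(x·z₀·z₀) = 0 as well, and equals g x * g z₀
    have h3 := h x z₀
    have k2 := key (x * z₀)
    rw [hF0, mul_zero, neg_zero] at k2
    have hxz : g (x * z₀ * z₀) = 0 := by
      rcases mul_eq_zero.mp k2 with h' | h'
      · exact h'
      · exact absurd h' hg
    rw [hxz, hf, mul_zero, sub_zero] at h3
    have : g x = 0 := by
      rcases mul_eq_zero.mp h3.symm with h' | h'
      · exact h'
      · exact absurd h' hg
    simpa using this
  refine ⟨hF, fun x y => ?_⟩
  have k := key (x * y)
  rw [h x y] at k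
  field_simp
  linear_combination k
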